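/- For all integers m ≥ 1, ℓ ∈ ℤ, and every natural number n, one has ∑_{j=0}^{⌊(m−1)/2⌋} (−1)^j · C(m−1−j, j) · ( A_{n+m−2j}(2, 2m, ℓ, 1) − 2·A_{n+m−1−2j}(2, 2m, ℓ, 1) ) = 0. Equivalently, (N−2)·F_m(N,−1)·A_n(2, 2m, ℓ, 1) = 0 where N is the shift operator N·A_n = A_{n+1} and F denotes the Fibonacci polynomials. -/

import Mathlib

/-- Binomial coefficient `C(a, r)` with integer lower index, equal to `0` for `r < 0`. -/
noncomputable def Cz (a : ℕ) (r : ℤ) : ℝ :=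
  if 0 ≤ r then (a.choose r.toNat : ℝ) else 0

/-- `A n (k, m, ℓ, z) = ∑_{h ∈ ℤ} C(n, ⌊(n + m h + ℓ)/k⌋) z^h`. -/
noncomputable def A (k m : ℕ) (l : ℤ) (z : ℝ) (n : ℕ) : ℝ :=
  ∑ᶠ h : ℤ, Cz n (((n : ℤ) + m * h + l).fdiv k) * z ^ h
lemma Cz_pascal (n : ℕ) (r : ℤ) : Cz (n+1) r = Cz n r + Cz n (r-1) := by
  unfold Cz
  rcases lt_trichotomy r 0 with h | h | h
  · rw [if_neg (by omega), if_neg (by omega), if_neg (by omega)]; ring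
  · subst h; norm_num
  · rw [if_pos (by omega), if_pos (by omega), if_pos (by omega)]
    obtain ⟨k, hk⟩ : ∃ k : ℕ, r.toNat = k + 1 := ⟨r.toNat - 1, by omega⟩
    have h2 : (r-1).toNat = k := by omega
    rw [hk, h2, Nat.choose_succ_succ]
    push_cast; ring

lemma Cz_symm (n : ℕ) (r : ℤ) : Cz n r = Cz n ((n : ℤ) - r) := by
  unfold Cz
  rcases lt_trichotomy r 0 with h | h | h
  · rw [if_neg (by omega), if_pos (by omega)]
    rw [Nat.choose_eq_zero_of_lt (by omega)]; norm_num
  · subst h; simp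
  · rcases le_or_gt r n with h2 | h2
    · rw [if_pos (by omega), if_pos (by omega)]
      have : ((n:ℤ) - r).toNat = n - r.toNat := by omega
      rw [this, Nat.choose_symm (by omega)]
    · rw [if_pos (by omega), if_neg (by omega)]
      rw [Nat.choose_eq_zero_of_lt (by omega)]; norm_num

lemma A_one (m n : ℕ) (l : ℤ) :
    A 2 (2*m) l 1 n = ∑ᶠ h : ℤ, Cz n (((n:ℤ) + 2*m*h + l).fdiv 2) := by
  unfold A
  simp only [one_zpow, mul_one]
  norm_num

lemma supp_fin (m n : ℕ) (hm : 1 ≤ m) (l : ℤ) :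
    (Function.support fun h : ℤ => Cz n (((n:ℤ) + 2*m*h + l).fdiv 2)).Finite := by
  apply Set.Finite.subset (Set.finite_Icc (-((n:ℤ)+1+|l|)) ((n:ℤ)+2+|l|))
  intro h hh
  simp only [Function.support, Set.mem_setOf_eq] at hh
  set u : ℤ := (n:ℤ) + 2*m*h + l with hu
  have h0 : 0 ≤ u.fdiv 2 := by
    by_contra hc
    rw [Cz, if_neg hc] at hh; exact hh rfl
  have h1 : (u.fdiv 2).toNat ≤ n := by
    by_contra hc
    rw [Cz, if_pos (by omega), Nat.choose_eq_zero_of_lt (by omega)] at hh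
    norm_num at hh
  rw [Int.fdiv_eq_ediv_of_nonneg _ (by norm_num)] at h0 h1
  have hu0 : 0 ≤ u := by
    by_contra hc
    have := Int.ediv_neg_of_neg_of_pos (a := u) (b := 2) (by omega) (by norm_num)
    omega
  have hun : u ≤ 2 * n + 1 := by omega
  have hl1 : l ≤ |l| := le_abs_self l
  have hl2 : -|l| ≤ l := neg_abs_le l
  have hmz : (1:ℤ) ≤ (m:ℤ) := by exact_mod_cast hm
  constructor
  · rcases le_or_gt 0 h with hs | hs
    · have : (0:ℤ) ≤ (n:ℤ)+1+|l| := by positivity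
      omega
    · have : ((m:ℤ)-1)*h ≤ 0 := mul_nonpos_of_nonneg_of_nonpos (by omega) (by omega)
      nlinarith
  · rcases le_or_gt h 0 with hs | hs
    · have : (0:ℤ) ≤ (n:ℤ)+2+|l| := by positivity
      omega
    · have : 0 ≤ ((m:ℤ)-1)*h := mul_nonneg (by omega) (by omega)
      nlinarith

lemma A_succ (m n : ℕ) (hm : 1 ≤ m) (l : ℤ) :
    A 2 (2*m) l 1 (n+1) = A 2 (2*m) (l+1) 1 n + A 2 (2*m) (l-1) 1 n := by
  rw [A_one, A_one, A_one]
  have key : ∀ h : ℤ, Cz (n+1) (((((n+1:ℕ)):ℤ) + 2*m*h + l).fdiv 2)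
      = Cz n (((n:ℤ) + 2*m*h + (l+1)).fdiv 2) + Cz n (((n:ℤ) + 2*m*h + (l-1)).fdiv 2) := by
    intro h
    set u : ℤ := (n:ℤ) + 2*m*h + (l+1) with hu
    have e1 : (((n+1:ℕ)):ℤ) + 2*m*h + l = u := by push_cast; ring
    have e2 : (n:ℤ) + 2*m*h + (l-1) = u - 2 := by ring
    rw [e1, e2, Cz_pascal]
    rw [Int.fdiv_eq_ediv_of_nonneg _ (by norm_num), Int.fdiv_eq_ediv_of_nonneg _ (by norm_num)]
    congr 2
    omega
  rw [finsum_congr key]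
  exact finsum_add_distrib (supp_fin m n hm (l+1)) (supp_fin m n hm (l-1))

lemma A_per (m n : ℕ) (l : ℤ) :
    A 2 (2*m) (l + 2*m) 1 n = A 2 (2*m) l 1 n := by
  rw [A_one, A_one]
  conv_rhs => rw [← finsum_comp_equiv (Equiv.addRight (1:ℤ))]
  apply finsum_congr
  intro h
  congr 2
  simp only [Equiv.coe_addRight]
  ring

lemma A_refl (m n : ℕ) (l : ℤ) :
    A 2 (2*m) l 1 n = A 2 (2*m) (1 - l) 1 n := by
  rw [A_one, A_one]
  rw [← finsum_comp_equiv (Equiv.neg ℤ)]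
  apply finsum_congr
  intro h
  rw [Cz_symm]
  congr 1
  simp only [Equiv.neg_apply]
  rw [Int.fdiv_eq_ediv_of_nonneg _ (by norm_num), Int.fdiv_eq_ediv_of_nonneg _ (by norm_num)]
  rw [show (2:ℤ) * (m:ℤ) * -h = -(2*(m:ℤ)*h) by ring]
  generalize (2:ℤ)*(m:ℤ)*h = w
  omega

noncomputable def Sfun (m n : ℕ) : ℕ → ℤ → ℝ
  | 0 => fun l => A 2 (2*m) l 1 n
  | (k+1) => fun l => Sfun m n k (l+1) + Sfun m n k (l-1)

lemma A_S (m n : ℕ) (hm : 1 ≤ m) (k : ℕ) : ∀ l : ℤ,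
    A 2 (2*m) l 1 (n+k) = Sfun m n k l := by
  induction k with
  | zero => intro l; rfl
  | succ k ih =>
    intro l
    rw [show n+(k+1) = (n+k)+1 by ring, A_succ m (n+k) hm l, ih, ih]
    rfl

lemma g_per (m n : ℕ) (t : ℤ) (k : ℤ) :
    Sfun m n 0 (t + 2*m*k) = Sfun m n 0 t := by
  induction k using Int.induction_on with
  | zero => simp
  | succ i ih =>
    have h1 : t + 2*(m:ℤ)*(i+1) = (t + 2*m*i) + 2*m := by ring
    rw [h1]
    show A 2 (2*m) ((t + 2*m*i) + 2*m) 1 n = _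
    rw [A_per m n (t + 2*m*i)]
    exact ih
  | pred i ih =>
    have h1 : t + 2*(m:ℤ)*(-i-1) = (t + 2*m*(-i) - 2*m) := by ring
    rw [h1]
    have := A_per m n (t + 2*m*(-i) - 2*m)
    rw [show t + 2*(m:ℤ)*(-i) - 2*m + 2*m = t + 2*m*(-i) by ring] at this
    show A 2 (2*m) (t + 2*m*(-i) - 2*m) 1 n = _
    rw [← this]
    exact ih

lemma g_refl (m n : ℕ) (t : ℤ) : Sfun m n 0 t = Sfun m n 0 (1 - t) :=
  A_refl m n t

noncomputable def ufun (m n M : ℕ) (l : ℤ) : ℝ :=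
  ∑ j ∈ Finset.range M, (-1:ℝ)^j * ((M-1-j).choose j : ℝ) * Sfun m n (M-1-2*j) l

noncomputable def vfun (m n M : ℕ) (l : ℤ) : ℝ :=
  ∑ i ∈ Finset.range M, Sfun m n 0 (l + (M:ℤ) - 1 - 2*(i:ℤ))

lemma v_rec (m n M : ℕ) (l : ℤ) :
    vfun m n (M+2) l = vfun m n (M+1) (l+1) + vfun m n (M+1) (l-1) - vfun m n M l := by
  unfold vfun
  rw [Finset.sum_range_succ (f := fun i => Sfun m n 0 (l + ((M+2:ℕ):ℤ) - 1 - 2*(i:ℤ))) (n := M+1)]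
  rw [Finset.sum_range_succ (f := fun i => Sfun m n 0 ((l-1) + ((M+1:ℕ):ℤ) - 1 - 2*(i:ℤ))) (n := M)]
  have e1 : ∑ i ∈ Finset.range (M+1), Sfun m n 0 (l + ((M+2:ℕ):ℤ) - 1 - 2*(i:ℤ))
      = ∑ i ∈ Finset.range (M+1), Sfun m n 0 ((l+1) + ((M+1:ℕ):ℤ) - 1 - 2*(i:ℤ)) := by
    apply Finset.sum_congr rfl
    intro i _
    congr 1
    push_cast
    ring
  have e2 : ∑ i ∈ Finset.range M, Sfun m n 0 ((l-1) + ((M+1:ℕ):ℤ) - 1 - 2*(i:ℤ))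
      = ∑ i ∈ Finset.range M, Sfun m n 0 (l + (M:ℤ) - 1 - 2*(i:ℤ)) := by
    apply Finset.sum_congr rfl
    intro i _
    congr 1
    push_cast
    ring
  have e3 : Sfun m n 0 (l + ((M+2:ℕ):ℤ) - 1 - 2*((M+1:ℕ):ℤ))
      = Sfun m n 0 ((l-1) + ((M+1:ℕ):ℤ) - 1 - 2*((M:ℕ):ℤ)) := by
    congr 1
    push_cast
    ring
  rw [e1, e2, e3]
  ring

lemma u_rec (m n M : ℕ) (l : ℤ) :
    ufun m n (M+2) l = ufun m n (M+1) (l+1) + ufun m n (M+1) (l-1) - ufun m n M l := by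
  have hA : ufun m n (M+1) (l+1) + ufun m n (M+1) (l-1)
      = ∑ j ∈ Finset.range (M+1), (-1:ℝ)^j * ((M-j).choose j : ℝ) * Sfun m n (M+1-2*j) l := by
    unfold ufun
    rw [← Finset.sum_add_distrib]
    apply Finset.sum_congr rfl
    intro j hj
    simp only [Finset.mem_range] at hj
    have hc : M+1-1-j = M - j := by omega
    have hidx : M+1-1-2*j = M - 2*j := by omega
    rw [hc, hidx]
    by_cases h2 : 2*j ≤ M
    · have hs : M+1-2*j = (M-2*j)+1 := by omega
      rw [hs]
      have hr : Sfun m n ((M-2*j)+1) l = Sfun m n (M-2*j) (l+1) + Sfun m n (M-2*j) (l-1) := rfl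
      rw [hr]; ring
    · rw [Nat.choose_eq_zero_of_lt (by omega)]
      norm_num
  have hRsum : ∑ j ∈ Finset.range (M+1), (-1:ℝ)^j * ((M-j).choose j : ℝ) * Sfun m n (M+1-2*j) l
      = Sfun m n (M+1) l
        - ∑ j ∈ Finset.range M, (-1:ℝ)^j * ((M-1-j).choose (j+1) : ℝ) * Sfun m n (M-1-2*j) l := by
    rw [Finset.sum_range_succ']
    have hterm : ∀ j ∈ Finset.range M,
        (-1:ℝ)^(j+1) * ((M-(j+1)).choose (j+1) : ℝ) * Sfun m n (M+1-2*(j+1)) l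
        = -((-1:ℝ)^j * ((M-1-j).choose (j+1) : ℝ) * Sfun m n (M-1-2*j) l) := by
      intro j hj
      have h1 : M-(j+1) = M-1-j := by omega
      have h2 : M+1-2*(j+1) = M-1-2*j := by omega
      rw [h1, h2, pow_succ]
      ring
    rw [Finset.sum_congr rfl hterm, Finset.sum_neg_distrib]
    norm_num
    ring
  have hLsum : ∑ j ∈ Finset.range (M+2), (-1:ℝ)^j * (((M+2)-1-j).choose j : ℝ) * Sfun m n ((M+2)-1-2*j) l
      = Sfun m n (M+1) l
        - ∑ j ∈ Finset.range M, (-1:ℝ)^j * ((M-1-j).choose (j+1) : ℝ) * Sfun m n (M-1-2*j) l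
        - ∑ j ∈ Finset.range M, (-1:ℝ)^j * ((M-1-j).choose j : ℝ) * Sfun m n (M-1-2*j) l := by
    rw [Finset.sum_range_succ', Finset.sum_range_succ]
    have htop : (-1:ℝ)^(M+1) * (((M+2)-1-(M+1)).choose (M+1) : ℝ) * Sfun m n ((M+2)-1-2*(M+1)) l = 0 := by
      have h0 : (M+2)-1-(M+1) = 0 := by omega
      rw [h0, Nat.choose_eq_zero_of_lt (by omega)]
      norm_num
    rw [htop]
    have hterm : ∀ j ∈ Finset.range M,
        (-1:ℝ)^(j+1) * (((M+2)-1-(j+1)).choose (j+1) : ℝ) * Sfun m n ((M+2)-1-2*(j+1)) l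
        = -((-1:ℝ)^j * ((M-1-j).choose j : ℝ) * Sfun m n (M-1-2*j) l)
          - ((-1:ℝ)^j * ((M-1-j).choose (j+1) : ℝ) * Sfun m n (M-1-2*j) l) := by
      intro j hj
      simp only [Finset.mem_range] at hj
      have h1 : (M+2)-1-(j+1) = (M-1-j)+1 := by omega
      have h2 : (M+2)-1-2*(j+1) = M-1-2*j := by omega
      rw [h1, h2, Nat.choose_succ_succ, pow_succ]
      push_cast
      ring
    rw [Finset.sum_congr rfl hterm, Finset.sum_sub_distrib, Finset.sum_neg_distrib]
    norm_num
    ring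
  have hu2 : ufun m n (M+2) l
      = ∑ j ∈ Finset.range (M+2), (-1:ℝ)^j * (((M+2)-1-j).choose j : ℝ) * Sfun m n ((M+2)-1-2*j) l := rfl
  have huM : ufun m n M l
      = ∑ j ∈ Finset.range M, (-1:ℝ)^j * ((M-1-j).choose j : ℝ) * Sfun m n (M-1-2*j) l := rfl
  rw [hA, hRsum, hu2, hLsum, huM]

lemma uv (m n : ℕ) : ∀ M, ∀ l : ℤ, ufun m n M l = vfun m n M l := by
  intro M
  induction M using Nat.twoStepInduction with
  | zero => intro l; simp [ufun, vfun]
  | one => intro l; norm_num [ufun, vfun]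
  | more K ihK ihK1 =>
    intro l
    rw [u_rec, ihK1, ihK1, ihK, ← v_rec]

lemma v_pair (m n : ℕ) (hm : 1 ≤ m) (l : ℤ) :
    ∑ i ∈ Finset.range m, Sfun m n 0 (l + (m:ℤ) - 2*(i:ℤ))
      = ∑ i ∈ Finset.range m, Sfun m n 0 (l + (m:ℤ) - 1 - 2*(i:ℤ)) := by
  have hmz : (0:ℤ) < (m:ℤ) := by exact_mod_cast hm
  set π : ℕ → ℕ := fun i => ((l - 1 - (i:ℤ)) % (m:ℤ)).toNat with hπ
  have hmem : ∀ i : ℕ, i ∈ Finset.range m → π i ∈ Finset.range m := by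
    intro i _
    have h1 : 0 ≤ (l - 1 - (i:ℤ)) % (m:ℤ) := Int.emod_nonneg _ (by omega)
    have h2 : (l - 1 - (i:ℤ)) % (m:ℤ) < m := Int.emod_lt_of_pos _ hmz
    simp only [Finset.mem_range, hπ]
    omega
  have hinv : ∀ i ∈ Finset.range m, π (π i) = i := by
    intro i hi
    simp only [Finset.mem_range] at hi
    have h1 : 0 ≤ (l - 1 - (i:ℤ)) % (m:ℤ) := Int.emod_nonneg _ (by omega)
    have hcast : ((π i : ℕ) : ℤ) = (l - 1 - (i:ℤ)) % (m:ℤ) := by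
      simp only [hπ]; exact Int.toNat_of_nonneg h1
    have hd : (l - 1 - (i:ℤ)) % (m:ℤ) = (l - 1 - (i:ℤ)) - m * ((l - 1 - (i:ℤ)) / m) :=
      Int.emod_def _ _
    have key : (l - 1 - ((π i : ℕ) : ℤ)) % (m:ℤ) = (i:ℤ) := by
      rw [hcast, hd]
      have : l - 1 - (l - 1 - (i:ℤ) - m * ((l - 1 - (i:ℤ)) / m))
          = (i:ℤ) + m * ((l - 1 - (i:ℤ)) / m) := by ring
      rw [this, Int.add_mul_emod_self_left, Int.emod_eq_of_lt (by omega) (by omega)]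
    simp only [hπ] at key ⊢
    omega
  apply Finset.sum_nbij' π π hmem hmem hinv hinv
  intro i hi
  simp only [Finset.mem_range] at hi
  have h1 : 0 ≤ (l - 1 - (i:ℤ)) % (m:ℤ) := Int.emod_nonneg _ (by omega)
  have hcast : ((π i : ℕ) : ℤ) = (l - 1 - (i:ℤ)) % (m:ℤ) := by
    simp only [hπ]; exact Int.toNat_of_nonneg h1
  set q : ℤ := (l - 1 - (i:ℤ)) / m with hq
  have hd : (l - 1 - (i:ℤ)) % (m:ℤ) = (l - 1 - (i:ℤ)) - m * q := Int.emod_def _ _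
  have harg : l + (m:ℤ) - 1 - 2*((π i : ℕ) : ℤ)
      = (1 - (l + (m:ℤ) - 2*(i:ℤ))) + 2*m*(q+1) := by
    rw [hcast, hd]; ring
  calc Sfun m n 0 (l + (m:ℤ) - 2*(i:ℤ))
      = Sfun m n 0 (1 - (l + (m:ℤ) - 2*(i:ℤ))) := g_refl m n _
    _ = Sfun m n 0 ((1 - (l + (m:ℤ) - 2*(i:ℤ))) + 2*m*(q+1)) := (g_per m n _ _).symm
    _ = Sfun m n 0 (l + (m:ℤ) - 1 - 2*((π i : ℕ) : ℤ)) := by rw [harg]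

lemma vzero (m n : ℕ) (hm : 1 ≤ m) (l : ℤ) :
    vfun m n m (l+1) + vfun m n m (l-1) - 2 * vfun m n m l = 0 := by
  have ev1 : vfun m n m (l+1) = ∑ i ∈ Finset.range m, Sfun m n 0 (l + (m:ℤ) - 2*(i:ℤ)) := by
    unfold vfun
    apply Finset.sum_congr rfl
    intro i _
    congr 1
    ring
  have ev2 : vfun m n m (l-1) = ∑ i ∈ Finset.range m, Sfun m n 0 (l + (m:ℤ) - 2*((i:ℤ)+1)) := by
    unfold vfun
    apply Finset.sum_congr rfl
    intro i _
    congr 1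
    ring
  have ev3 : vfun m n m l = ∑ i ∈ Finset.range m, Sfun m n 0 (l + (m:ℤ) - 1 - 2*(i:ℤ)) := rfl
  have hshift : ∑ i ∈ Finset.range m, Sfun m n 0 (l + (m:ℤ) - 2*((i:ℤ)+1))
      = ∑ i ∈ Finset.range m, Sfun m n 0 (l + (m:ℤ) - 2*(i:ℤ)) := by
    set f : ℕ → ℝ := fun i => Sfun m n 0 (l + (m:ℤ) - 2*(i:ℤ)) with hf
    have hfm : f m = f 0 := by
      simp only [hf]
      have : l + (m:ℤ) - 2*((m:ℕ):ℤ) = (l + (m:ℤ)) + 2*m*(-1) := by push_cast; ring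
      rw [this, g_per m n (l + (m:ℤ)) (-1)]
      norm_num
    have h1 := Finset.sum_range_succ f m
    have h2 := Finset.sum_range_succ' f m
    have heq : ∀ i ∈ Finset.range m, Sfun m n 0 (l + (m:ℤ) - 2*((i:ℤ)+1)) = f (i+1) := by
      intro i _
      simp only [hf]
      congr 1
      all_goals (push_cast; try ring)
    rw [Finset.sum_congr rfl heq]
    rw [hfm] at h1
    linarith [h1, h2]
  rw [ev1, ev2, ev3, hshift, v_pair m n hm l]
  ring

theorem stmt14 (m : ℕ) (hm : 1 ≤ m) (l : ℤ) (n : ℕ) :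
    ∑ j ∈ Finset.range ((m - 1) / 2 + 1), (-1 : ℝ) ^ j * ((m - 1 - j).choose j : ℝ) *
        (A 2 (2 * m) l 1 (n + m - 2 * j) - 2 * A 2 (2 * m) l 1 (n + m - 1 - 2 * j)) = 0 := by
  have step1 : ∀ j ∈ Finset.range ((m - 1) / 2 + 1),
      (-1 : ℝ) ^ j * ((m - 1 - j).choose j : ℝ) *
        (A 2 (2 * m) l 1 (n + m - 2 * j) - 2 * A 2 (2 * m) l 1 (n + m - 1 - 2 * j))
      = (-1 : ℝ) ^ j * ((m - 1 - j).choose j : ℝ) *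
        (Sfun m n (m - 2 * j) l - 2 * Sfun m n (m - 1 - 2 * j) l) := by
    intro j hj
    simp only [Finset.mem_range] at hj
    have h1 : n + m - 2 * j = n + (m - 2 * j) := by omega
    have h2 : n + m - 1 - 2 * j = n + (m - 1 - 2 * j) := by omega
    rw [h1, h2, A_S m n hm, A_S m n hm]
  rw [Finset.sum_congr rfl step1]
  have step2 : ∑ j ∈ Finset.range ((m - 1) / 2 + 1), (-1 : ℝ) ^ j * ((m - 1 - j).choose j : ℝ) *
        (Sfun m n (m - 2 * j) l - 2 * Sfun m n (m - 1 - 2 * j) l)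
      = ∑ j ∈ Finset.range m, (-1 : ℝ) ^ j * ((m - 1 - j).choose j : ℝ) *
        (Sfun m n (m - 2 * j) l - 2 * Sfun m n (m - 1 - 2 * j) l) := by
    apply Finset.sum_subset
    · intro x hx
      simp only [Finset.mem_range] at hx ⊢
      omega
    · intro x hx hnx
      simp only [Finset.mem_range] at hx hnx
      rw [Nat.choose_eq_zero_of_lt (by omega)]
      norm_num
  rw [step2]
  have step3 : ∑ j ∈ Finset.range m, (-1 : ℝ) ^ j * ((m - 1 - j).choose j : ℝ) *
        (Sfun m n (m - 2 * j) l - 2 * Sfun m n (m - 1 - 2 * j) l)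
      = (∑ j ∈ Finset.range m, (-1 : ℝ) ^ j * ((m - 1 - j).choose j : ℝ) * Sfun m n (m - 2 * j) l)
        - 2 * ufun m n m l := by
    have huM : ufun m n m l
        = ∑ j ∈ Finset.range m, (-1:ℝ)^j * ((m-1-j).choose j : ℝ) * Sfun m n (m-1-2*j) l := rfl
    rw [huM, Finset.mul_sum, ← Finset.sum_sub_distrib]
    apply Finset.sum_congr rfl
    intro j _
    ring
  have step4 : ∑ j ∈ Finset.range m, (-1 : ℝ) ^ j * ((m - 1 - j).choose j : ℝ) * Sfun m n (m - 2 * j) l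
      = ufun m n m (l+1) + ufun m n m (l-1) := by
    have hu1 : ufun m n m (l+1)
        = ∑ j ∈ Finset.range m, (-1:ℝ)^j * ((m-1-j).choose j : ℝ) * Sfun m n (m-1-2*j) (l+1) := rfl
    have hu2 : ufun m n m (l-1)
        = ∑ j ∈ Finset.range m, (-1:ℝ)^j * ((m-1-j).choose j : ℝ) * Sfun m n (m-1-2*j) (l-1) := rfl
    rw [hu1, hu2, ← Finset.sum_add_distrib]
    apply Finset.sum_congr rfl
    intro j hj
    simp only [Finset.mem_range] at hj
    by_cases h2 : 2*j ≤ m - 1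
    · have hs : m - 2*j = (m-1-2*j)+1 := by omega
      rw [hs]
      have hr : Sfun m n ((m-1-2*j)+1) l = Sfun m n (m-1-2*j) (l+1) + Sfun m n (m-1-2*j) (l-1) := rfl
      rw [hr]
      ring
    · rw [Nat.choose_eq_zero_of_lt (by omega)]
      norm_num
  rw [step3, step4, uv m n m (l+1), uv m n m (l-1), uv m n m l]
  have := vzero m n hm l
  linarith
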